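/- Let G be a finite simple graph with positive real vertex weights ω, and let u, v be non-adjacent vertices having at least one common neighbor, such that {u, v} is a heavy set, i.e., for every independent set Ĩ of the induced subgraph G[N({u,v})] it holds that ω(N(Ĩ) ∩ {u,v}) ≥ ω(Ĩ). Then α_ω(G) = α_ω(G − N[{u,v}]) + ω(u) + ω(v). -/

import Mathlib

open scoped Classical

/-- `S` is an independent set of vertices in `G`: no two members are adjacent. -/
def IsIndepSet {V : Type*} (G : SimpleGraph V) (S : Finset V) : Prop :=
  ∀ a ∈ S, ∀ b ∈ S, ¬ G.Adj a b

/-- The maximum total `w`-weight of an independent set of `G` contained in `A`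
(the weighted independence number of the subgraph of `G` induced on `A`). -/
noncomputable def alphaOn {V : Type*} [Fintype V] (G : SimpleGraph V) (w : V → ℝ)
    (A : Set V) : ℝ :=
  sSup {x : ℝ | ∃ S : Finset V, ↑S ⊆ A ∧ IsIndepSet G S ∧ x = ∑ v ∈ S, w v}

/-- The maximum total `w`-weight of an independent set of `G`. -/
noncomputable def alpha {V : Type*} [Fintype V] (G : SimpleGraph V) (w : V → ℝ) : ℝ :=
  alphaOn G w Set.univ

/-- `S` is a maximum `w`-weight independent set of `G`. -/
def IsMWIS {V : Type*} [Fintype V] (G : SimpleGraph V) (w : V → ℝ) (S : Finset V) : Prop :=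
  IsIndepSet G S ∧ ∑ v ∈ S, w v = alpha G w

/-- The closed neighborhood `N[v]` of a vertex. -/
def closedNbhd {V : Type*} (G : SimpleGraph V) (v : V) : Set V :=
  insert v (G.neighborSet v)

/-- The open neighborhood `N(S)` of a set of vertices. -/
def setNbhd {V : Type*} (G : SimpleGraph V) (S : Set V) : Set V :=
  (⋃ s ∈ S, G.neighborSet s) \ S

/-- The closed neighborhood `N[S]` of a set of vertices. -/
def closedSetNbhd {V : Type*} (G : SimpleGraph V) (S : Set V) : Set V :=
  setNbhd G S ∪ S

lemma alphaSet_bddAbove {V : Type*} [Fintype V] (G : SimpleGraph V) (w : V → ℝ) (A : Set V) :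
    BddAbove {x : ℝ | ∃ S : Finset V, ↑S ⊆ A ∧ IsIndepSet G S ∧ x = ∑ v ∈ S, w v} := by
  apply Set.Finite.bddAbove
  apply Set.Finite.subset (Set.finite_range (fun S : Finset V => ∑ v ∈ S, w v))
  rintro x ⟨S, -, -, rfl⟩
  exact ⟨S, rfl⟩

lemma le_alphaOn {V : Type*} [Fintype V] (G : SimpleGraph V) (w : V → ℝ) (A : Set V)
    (S : Finset V) (hS : ↑S ⊆ A) (hind : IsIndepSet G S) :
    ∑ v ∈ S, w v ≤ alphaOn G w A :=
  le_csSup (alphaSet_bddAbove G w A) ⟨S, hS, hind, rfl⟩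

lemma alphaOn_le {V : Type*} [Fintype V] (G : SimpleGraph V) (w : V → ℝ) (A : Set V) (b : ℝ)
    (h : ∀ S : Finset V, ↑S ⊆ A → IsIndepSet G S → ∑ v ∈ S, w v ≤ b) :
    alphaOn G w A ≤ b := by
  have hne : ({x : ℝ | ∃ S : Finset V, ↑S ⊆ A ∧ IsIndepSet G S ∧ x = ∑ v ∈ S, w v}).Nonempty :=
    ⟨0, ∅, by simp, fun a ha => absurd ha (by simp), by simp⟩
  apply csSup_le hne
  rintro x ⟨S, hS, hind, rfl⟩
  exact h S hS hind

theorem stmt_14 {V : Type*} [Fintype V] (G : SimpleGraph V) (w : V → ℝ)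
    (hw : ∀ x, 0 < w x) (u v : V) (hne : u ≠ v) (hnadj : ¬ G.Adj u v)
    (hcommon : ∃ x, G.Adj u x ∧ G.Adj v x)
    (hheavy : ∀ C : Finset V, ↑C ⊆ setNbhd G ({u, v} : Set V) → IsIndepSet G C →
      ∑ x ∈ C, w x ≤
        ∑ x ∈ ({u, v} : Finset V).filter (fun s => s ∈ setNbhd G (↑C : Set V)), w x) :
    alpha G w = alphaOn G w (closedSetNbhd G {u, v})ᶜ + w u + w v := by
  classical
  have hnb : ∀ x, x ∈ setNbhd G ({u, v} : Set V) ↔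
      (G.Adj u x ∨ G.Adj v x) ∧ ¬(x = u ∨ x = v) := by
    intro x
    simp [setNbhd, Set.mem_diff]
  apply le_antisymm
  · -- alpha ≤ RHS
    unfold alpha
    apply alphaOn_le
    intro S _ hind
    set C := S.filter (fun x => x ∈ setNbhd G ({u, v} : Set V)) with hC
    set T := S.filter (fun x => x = u ∨ x = v) with hT
    set S0 := S.filter (fun x => x ∈ (closedSetNbhd G ({u, v} : Set V))ᶜ) with hS0
    have hdS0C : Disjoint S0 C := by
      rw [Finset.disjoint_left]
      intro x hx hx'
      rw [hS0, Finset.mem_filter] at hx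
      rw [hC, Finset.mem_filter] at hx'
      exact hx.2 (Or.inl hx'.2)
    have hdT : Disjoint (S0 ∪ C) T := by
      rw [Finset.disjoint_left]
      intro x hx hx'
      rw [hT, Finset.mem_filter] at hx'
      rcases Finset.mem_union.mp hx with h | h
      · rw [hS0, Finset.mem_filter] at h
        exact h.2 (Or.inr (by simpa using hx'.2))
      · rw [hC, Finset.mem_filter] at h
        exact ((hnb x).mp h.2).2 hx'.2
    have hunion : S0 ∪ C ∪ T = S := by
      ext x
      simp only [Finset.mem_union, hS0, hC, hT, Finset.mem_filter, Set.mem_compl_iff,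
        closedSetNbhd, Set.mem_union, hnb x]
      constructor
      · rintro ((h | h) | h) <;> exact h.1
      · intro hx
        by_cases h1 : x = u ∨ x = v
        · exact Or.inr ⟨hx, h1⟩
        · by_cases h2 : G.Adj u x ∨ G.Adj v x
          · exact Or.inl (Or.inr ⟨hx, h2, h1⟩)
          · refine Or.inl (Or.inl ⟨hx, ?_⟩)
            rintro (h | h)
            · exact h2 h.1
            · simp at h; exact h1 h
    have hsplit : ∑ x ∈ S, w x = ∑ x ∈ S0, w x + ∑ x ∈ C, w x + ∑ x ∈ T, w x := by
      rw [← hunion, Finset.sum_union hdT, Finset.sum_union hdS0C]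
    have t1 : ∑ x ∈ S0, w x ≤ alphaOn G w (closedSetNbhd G {u, v})ᶜ := by
      apply le_alphaOn
      · intro x hx
        rw [Finset.coe_filter] at hx
        exact hx.2
      · intro a ha b hb
        exact hind a (Finset.filter_subset _ _ ha) b (Finset.filter_subset _ _ hb)
    have hCsub : ↑C ⊆ setNbhd G ({u, v} : Set V) := by
      intro x hx
      rw [hC, Finset.coe_filter] at hx
      exact hx.2
    have hCind : IsIndepSet G C := by
      intro a ha b hb
      exact hind a (Finset.filter_subset _ _ ha) b (Finset.filter_subset _ _ hb)
    have heavy := hheavy C hCsub hCind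
    set D := ({u, v} : Finset V).filter (fun s => s ∈ setNbhd G (↑C : Set V)) with hD
    have hDT : Disjoint D T := by
      rw [Finset.disjoint_left]
      intro x hx hx'
      rw [hD, Finset.mem_filter] at hx
      rw [hT, Finset.mem_filter] at hx'
      obtain ⟨hx1, hx2⟩ := hx
      simp only [setNbhd, Set.mem_diff, Set.mem_iUnion] at hx2
      obtain ⟨⟨c, hcC, hadj⟩, -⟩ := hx2
      have hcS : c ∈ S := Finset.filter_subset _ _ (by exact_mod_cast hcC)
      exact hind c hcS x hx'.1 hadj
    have hTsub : T ⊆ ({u, v} : Finset V) := by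
      intro x hx
      rw [hT, Finset.mem_filter] at hx
      simpa using hx.2
    have hDsub : D ⊆ ({u, v} : Finset V) := Finset.filter_subset _ _
    have hbig : ∑ x ∈ D, w x + ∑ x ∈ T, w x ≤ w u + w v := by
      rw [← Finset.sum_union hDT]
      calc ∑ x ∈ D ∪ T, w x ≤ ∑ x ∈ ({u, v} : Finset V), w x :=
            Finset.sum_le_sum_of_subset_of_nonneg (Finset.union_subset hDsub hTsub)
              (fun i _ _ => (hw i).le)
        _ = w u + w v := Finset.sum_pair hne
    linarith
  · -- RHS ≤ alpha
    have key : alphaOn G w (closedSetNbhd G {u, v})ᶜ ≤ alpha G w - w u - w v := by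
      apply alphaOn_le
      intro S hS hind
      have hfacts : ∀ s ∈ S, ¬ G.Adj u s ∧ ¬ G.Adj v s ∧ s ≠ u ∧ s ≠ v := by
        intro s hs
        have h1 : s ∉ closedSetNbhd G ({u, v} : Set V) := hS hs
        simp only [closedSetNbhd, Set.mem_union, hnb s, not_or, Set.mem_insert_iff, Set.mem_singleton_iff] at h1
        push_neg at h1
        obtain ⟨h2, h3, h4⟩ := h1
        refine ⟨?_, ?_, h3, h4⟩ <;> intro hadj
        · exact absurd (h2 (Or.inl hadj)) (by simp [h3, h4])
        · exact absurd (h2 (Or.inr hadj)) (by simp [h3, h4])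
      have huS : u ∉ S := fun h => (hfacts u h).2.2.1 rfl
      have hvS : v ∉ S := fun h => (hfacts v h).2.2.2 rfl
      have hind' : IsIndepSet G (insert u (insert v S)) := by
        intro a ha b hb hab
        simp only [Finset.mem_insert] at ha hb
        rcases ha with rfl | rfl | ha <;> rcases hb with rfl | rfl | hb
        · exact G.irrefl hab
        · exact hnadj hab
        · exact (hfacts b hb).1 hab
        · exact hnadj hab.symm
        · exact G.irrefl hab
        · exact (hfacts b hb).2.1 hab
        · exact (hfacts a ha).1 hab.symm
        · exact (hfacts a ha).2.1 hab.symm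
        · exact hind a ha b hb hab
      have hle : ∑ x ∈ insert u (insert v S), w x ≤ alpha G w :=
        le_alphaOn G w Set.univ _ (by simp) hind'
      rw [Finset.sum_insert (by simp [hne, huS]), Finset.sum_insert hvS] at hle
      linarith
    linarith
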